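/- A metric space X satisfies condition (C) if and only if the quotient algebra B_h(X)/B_0(X) contains no non-trivial idempotent element; that is, if and only if there is no bounded slowly oscillating function f : X → ℂ such that f² − f tends to zero at infinity while neither f nor 1 − f tends to zero at infinity. (Equivalently, the Higson corona of X is topologically connected.) -/

import Mathlib

open Bornology

def Bornologous {X Y : Type*} [PseudoMetricSpace X] [PseudoMetricSpace Y] (f : X → Y) : Prop :=
  ∀ R : ℝ, 0 < R → ∃ S : ℝ, 0 < S ∧ ∀ x x' : X, dist x x' ≤ R → dist (f x) (f x') ≤ S

def ProperMap {X Y : Type*} [PseudoMetricSpace X] [PseudoMetricSpace Y] (f : X → Y) : Prop :=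
  ∀ B : Set Y, IsBounded B → IsBounded (f ⁻¹' B)

def IsCoarse {X Y : Type*} [PseudoMetricSpace X] [PseudoMetricSpace Y] (f : X → Y) : Prop :=
  Bornologous f ∧ ProperMap f

def Close {X Y : Type*} [PseudoMetricSpace Y] (f g : X → Y) : Prop :=
  ∃ R : ℝ, 0 < R ∧ ∀ x : X, dist (f x) (g x) ≤ R

def coprodDist {X Y : Type*} [MetricSpace X] [MetricSpace Y] (x₀ : X) (y₀ : Y) :
    X ⊕ Y → X ⊕ Y → ℝ
  | Sum.inl a, Sum.inl b => dist a b
  | Sum.inl a, Sum.inr b => dist a x₀ + 1 + dist y₀ b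
  | Sum.inr a, Sum.inl b => dist b x₀ + 1 + dist y₀ a
  | Sum.inr a, Sum.inr b => dist a b

noncomputable def coprodMetric {X Y : Type*} [MetricSpace X] [MetricSpace Y]
    (x₀ : X) (y₀ : Y) : MetricSpace (X ⊕ Y) where
  dist := coprodDist x₀ y₀
  dist_self := by rintro (a | a) <;> simp [coprodDist]
  dist_comm := fun p q => by
    match p, q with
    | Sum.inl a, Sum.inl b => exact dist_comm a b
    | Sum.inl a, Sum.inr b => rfl
    | Sum.inr a, Sum.inl b => rfl
    | Sum.inr a, Sum.inr b => exact dist_comm a b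
  dist_triangle := fun p q r => by
    match p, q, r with
    | Sum.inl a, Sum.inl b, Sum.inl c => exact dist_triangle a b c
    | Sum.inl a, Sum.inl b, Sum.inr c =>
      show dist a x₀ + 1 + dist y₀ c ≤ dist a b + (dist b x₀ + 1 + dist y₀ c)
      have := dist_triangle a b x₀; linarith
    | Sum.inl a, Sum.inr b, Sum.inl c =>
      show dist a c ≤ (dist a x₀ + 1 + dist y₀ b) + (dist c x₀ + 1 + dist y₀ b)
      have h1 := dist_triangle a x₀ c
      have h2 : dist x₀ c = dist c x₀ := dist_comm _ _
      have h3 := dist_nonneg (x := y₀) (y := b)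
      linarith
    | Sum.inl a, Sum.inr b, Sum.inr c =>
      show dist a x₀ + 1 + dist y₀ c ≤ (dist a x₀ + 1 + dist y₀ b) + dist b c
      have := dist_triangle y₀ b c; linarith
    | Sum.inr a, Sum.inl b, Sum.inl c =>
      show dist c x₀ + 1 + dist y₀ a ≤ (dist b x₀ + 1 + dist y₀ a) + dist b c
      have h1 := dist_triangle c b x₀
      have h2 : dist c b = dist b c := dist_comm _ _
      linarith
    | Sum.inr a, Sum.inl b, Sum.inr c =>
      show dist a c ≤ (dist b x₀ + 1 + dist y₀ a) + (dist b x₀ + 1 + dist y₀ c)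
      have h1 := dist_triangle a y₀ c
      have h2 : dist a y₀ = dist y₀ a := dist_comm _ _
      have h3 := dist_nonneg (x := b) (y := x₀)
      linarith
    | Sum.inr a, Sum.inr b, Sum.inl c =>
      show dist c x₀ + 1 + dist y₀ a ≤ dist a b + (dist c x₀ + 1 + dist y₀ b)
      have h1 := dist_triangle y₀ b a
      have h2 : dist b a = dist a b := dist_comm _ _
      linarith
    | Sum.inr a, Sum.inr b, Sum.inr c => exact dist_triangle a b c
  eq_of_dist_eq_zero := fun {p q} h => by
    match p, q, h with
    | Sum.inl a, Sum.inl b, h => exact congrArg Sum.inl (eq_of_dist_eq_zero h)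
    | Sum.inl a, Sum.inr b, h =>
      exfalso
      have h1 := dist_nonneg (x := a) (y := x₀)
      have h2 := dist_nonneg (x := y₀) (y := b)
      have h' : dist a x₀ + 1 + dist y₀ b = 0 := h
      linarith
    | Sum.inr a, Sum.inl b, h =>
      exfalso
      have h1 := dist_nonneg (x := b) (y := x₀)
      have h2 := dist_nonneg (x := y₀) (y := a)
      have h' : dist b x₀ + 1 + dist y₀ a = 0 := h
      linarith
    | Sum.inr a, Sum.inr b, h => exact congrArg Sum.inr (eq_of_dist_eq_zero h)

/-- Condition (C): every coarse map into a coarse coproduct factors, up to closeness,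
through one of the coproduct injections. -/
def CondC (X : Type u) [MetricSpace X] : Prop :=
  ∀ (Y Z : Type u) [MetricSpace Y] [MetricSpace Z] (y₀ : Y) (z₀ : Z) (f : X → Y ⊕ Z),
    letI := coprodMetric y₀ z₀
    IsCoarse f →
      (∃ g : X → Y, IsCoarse g ∧ Close (Sum.inl ∘ g) f) ∨
      (∃ h : X → Z, IsCoarse h ∧ Close (Sum.inr ∘ h) f)

def IsBoundedFn {W : Type*} (f : W → ℂ) : Prop :=
  ∃ C : ℝ, ∀ x : W, ‖f x‖ ≤ C

/-- A bounded function to `ℂ` is *slowly oscillating* if for all `ε > 0` and `R > 0` there is a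
bounded set outside of which points at distance at most `R` have values at distance at most `ε`. -/
def SlowlyOscillating {W : Type*} [PseudoMetricSpace W] (f : W → ℂ) : Prop :=
  ∀ ε : ℝ, 0 < ε → ∀ R : ℝ, 0 < R → ∃ B : Set W, IsBounded B ∧
    ∀ x ∉ B, ∀ x' ∉ B, dist x x' ≤ R → ‖f x - f x'‖ ≤ ε

/-- A function *tends to zero at infinity* if outside of suitable bounded sets it is
uniformly small. -/
def TendsToZeroAtInfinity {W : Type*} [PseudoMetricSpace W] (f : W → ℂ) : Prop :=
  ∀ ε : ℝ, 0 < ε → ∃ B : Set W, IsBounded B ∧ ∀ x ∉ B, ‖f x‖ ≤ ε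

/-- Membership in `B_h(W)`: bounded and slowly oscillating. -/
def MemBh {W : Type*} [PseudoMetricSpace W] (f : W → ℂ) : Prop :=
  IsBoundedFn f ∧ SlowlyOscillating f

/-- Membership in `B_0(W)`: bounded and tending to zero at infinity. -/
def MemB0 {W : Type*} [PseudoMetricSpace W] (f : W → ℂ) : Prop :=
  IsBoundedFn f ∧ TendsToZeroAtInfinity f


/-- If `h` composed with an isometric embedding is close to a coarse map `f`,
then `h` is itself coarse. -/
lemma isCoarse_of_close_isometry {U W ZZ : Type*} [PseudoMetricSpace U]
    [PseudoMetricSpace W] [PseudoMetricSpace ZZ]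
    (ι : ZZ → W) (hι : ∀ a b, dist (ι a) (ι b) = dist a b)
    {f : U → W} {h : U → ZZ} (hf : IsCoarse f) (hc : Close (ι ∘ h) f) : IsCoarse h := by
  obtain ⟨R', hR', hcl⟩ := hc
  constructor
  · intro R hR
    obtain ⟨S, hS, hSf⟩ := hf.1 R hR
    refine ⟨R' + S + R', by linarith, fun x x' hxx => ?_⟩
    have t1 := dist_triangle (ι (h x)) (f x) (ι (h x'))
    have t2 := dist_triangle (f x) (f x') (ι (h x'))
    have h1 := hcl x
    have h2 := hcl x'
    have h3 := hSf x x' hxx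
    rw [← hι]
    rw [dist_comm (f x') (ι (h x'))] at t2
    simp only [Function.comp] at h1 h2
    linarith
  · intro B hB
    rcases B.eq_empty_or_nonempty with rfl | ⟨b₀, _⟩
    · simp
    obtain ⟨r, hr⟩ := hB.subset_closedBall b₀
    have hsub : h ⁻¹' B ⊆ f ⁻¹' (Metric.closedBall (ι b₀) (R' + r)) := by
      intro x hx
      have hd : dist (h x) b₀ ≤ r := hr hx
      have t := dist_triangle (f x) (ι (h x)) (ι b₀)
      rw [hι] at t
      have h1 := hcl x
      simp only [Function.comp] at h1
      rw [dist_comm (ι (h x)) (f x)] at h1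
      simp only [Set.mem_preimage, Metric.mem_closedBall]
      linarith
    exact (hf.2 _ Metric.isBounded_closedBall).subset hsub

/-- `X` satisfies condition (C) iff `B_h(X)/B_0(X)` contains no non-trivial
idempotent, i.e. there is no bounded slowly oscillating `f : X → ℂ` such that `f² - f` tends
to zero at infinity while neither `f` nor `1 - f` does. (Equivalently, the Higson corona of
`X` is connected.) -/
theorem condC_iff_no_nontrivial_idempotent {X : Type u} [MetricSpace X] :
    CondC X ↔
      ¬ ∃ f : X → ℂ, IsBoundedFn f ∧ SlowlyOscillating f ∧
        TendsToZeroAtInfinity (f * f - f) ∧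
        ¬ TendsToZeroAtInfinity f ∧ ¬ TendsToZeroAtInfinity (1 - f) := by
  constructor
  · -- Condition (C) implies no nontrivial idempotent.
    intro hC
    rintro ⟨f, hbf, hso, hsq, hnf, hn1⟩
    by_cases hne : Nonempty X
    case neg =>
      exact hnf fun ε hε => ⟨∅, Bornology.isBounded_empty,
        fun x _ => absurd ⟨x⟩ hne⟩
    obtain ⟨x₀⟩ := hne
    classical
    letI I : MetricSpace ((ULift.{u} ℝ) ⊕ (ULift.{u} ℝ)) :=
      coprodMetric (⟨0⟩ : ULift.{u} ℝ) (⟨0⟩ : ULift.{u} ℝ)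
    have hul : ∀ a b : ℝ, dist (ULift.up a) (ULift.up b) = |a - b| :=
      fun a b => Real.dist_eq a b
    have ell : ∀ a b : ℝ, dist (Sum.inl (ULift.up a) : (ULift.{u} ℝ) ⊕ (ULift.{u} ℝ))
        (Sum.inl (ULift.up b)) = |a - b| := fun a b => hul a b
    have err : ∀ a b : ℝ, dist (Sum.inr (ULift.up a) : (ULift.{u} ℝ) ⊕ (ULift.{u} ℝ))
        (Sum.inr (ULift.up b)) = |a - b| := fun a b => hul a b
    have elr : ∀ a b : ℝ, dist (Sum.inl (ULift.up a) : (ULift.{u} ℝ) ⊕ (ULift.{u} ℝ))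
        (Sum.inr (ULift.up b)) = |a - 0| + 1 + |0 - b| := fun a b => by
      show dist (ULift.up a) (ULift.up (0:ℝ)) + 1 + dist (ULift.up (0:ℝ)) (ULift.up b) = _
      rw [hul, hul]
    have erl : ∀ a b : ℝ, dist (Sum.inr (ULift.up a) : (ULift.{u} ℝ) ⊕ (ULift.{u} ℝ))
        (Sum.inl (ULift.up b)) = |b - 0| + 1 + |0 - a| := fun a b => by
      show dist (ULift.up b) (ULift.up (0:ℝ)) + 1 + dist (ULift.up (0:ℝ)) (ULift.up a) = _
      rw [hul, hul]
    set A : Set X := {x | ‖f x - 1‖ ≤ 1/4} with hA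
    set g : X → (ULift.{u} ℝ) ⊕ (ULift.{u} ℝ) :=
      fun x => if x ∈ A then Sum.inl (ULift.up (dist x x₀)) else Sum.inr (ULift.up (dist x x₀))
      with hg
    -- outside a bounded set, either |f x - 1| ≤ 1/4 or |f x| ≤ 1/4
    obtain ⟨B₀, hB₀, hB₀s⟩ := hsq (1/16) (by norm_num)
    have hsmall : ∀ x, x ∉ B₀ → x ∉ A → ‖f x‖ ≤ 1/4 := by
      intro x hx hxA
      have h1 : ‖f x * f x - f x‖ ≤ 1/16 := hB₀s x hx
      have h2 : f x * f x - f x = f x * (f x - 1) := by ring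
      rw [h2, norm_mul] at h1
      have h3 : ¬ ‖f x - 1‖ ≤ 1/4 := hxA
      push_neg at h3
      by_contra h4
      push_neg at h4
      nlinarith [norm_nonneg (f x), norm_nonneg (f x - 1)]
    -- generic bound on coproduct distances of g-values
    have ggen : ∀ x x' : X, dist (g x) (g x') ≤ dist x x₀ + 1 + dist x' x₀ := by
      intro x x'
      have d1 : (0:ℝ) ≤ dist x x₀ := dist_nonneg
      have d2 : (0:ℝ) ≤ dist x' x₀ := dist_nonneg
      by_cases h1 : x ∈ A <;> by_cases h2 : x' ∈ A <;>
        simp only [hg, if_pos, if_neg, h1, h2, if_true, if_false, ite_true, ite_false] <;>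
        [rw [ell]; rw [elr]; rw [erl]; rw [err]] <;>
        rcases abs_cases (dist x x₀ - dist x' x₀) with ⟨he, _⟩ | ⟨he, _⟩ <;>
        rcases abs_cases (dist x' x₀ - dist x x₀) with ⟨he2, _⟩ | ⟨he2, _⟩ <;>
        simp [abs_of_nonneg d1, abs_of_nonneg d2] <;> linarith
    have hgc : IsCoarse g := by
      constructor
      · intro R hR
        obtain ⟨B₁, hB₁, hB₁s⟩ := hso (1/4) (by norm_num) R hR
        obtain ⟨C, hCsub⟩ := (hB₀.union hB₁).subset_closedBall x₀
        set C' : ℝ := max C 0 with hC'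
        have hC'0 : (0:ℝ) ≤ C' := le_max_right _ _
        refine ⟨2*C' + 2*R + 2, by linarith, fun x x' hxx => ?_⟩
        by_cases hmem : x ∈ B₀ ∪ B₁ ∨ x' ∈ B₀ ∪ B₁
        · -- near the bounded set: use the generic bound
          have hbd : dist x x₀ ≤ C' + R ∧ dist x' x₀ ≤ C' + R := by
            rcases hmem with hm | hm
            · have h1 : dist x x₀ ≤ C := hCsub hm
              have h2 : dist x' x₀ ≤ dist x' x + dist x x₀ := dist_triangle _ _ _
              rw [dist_comm x' x] at h2
              constructor <;> [skip; skip] <;>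
                first
                | (calc dist x x₀ ≤ C := h1
                    _ ≤ C' + R := by have := le_max_left C 0; linarith)
                | linarith [le_max_left C 0]
            · have h1 : dist x' x₀ ≤ C := hCsub hm
              have h2 : dist x x₀ ≤ dist x x' + dist x' x₀ := dist_triangle _ _ _
              constructor <;> linarith [le_max_left C 0]
          have := ggen x x'
          linarith [hbd.1, hbd.2]
        · push_neg at hmem
          obtain ⟨hx, hx'⟩ := hmem
          have hx0 : x ∉ B₀ := fun h => hx (Set.mem_union_left _ h)
          have hx1 : x ∉ B₁ := fun h => hx (Set.mem_union_right _ h)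
          have hx0' : x' ∉ B₀ := fun h => hx' (Set.mem_union_left _ h)
          have hx1' : x' ∉ B₁ := fun h => hx' (Set.mem_union_right _ h)
          have hosc : ‖f x - f x'‖ ≤ 1/4 := hB₁s x hx1 x' hx1' hxx
          -- x and x' are on the same side
          have hside : x ∈ A ↔ x' ∈ A := by
            constructor
            · intro hxa
              by_contra hxa'
              have hs1 : ‖f x - 1‖ ≤ 1/4 := hxa
              have hs2 : ‖f x'‖ ≤ 1/4 := hsmall x' hx0' hxa'
              have key : (1:ℂ) = (1 - f x) + (f x - f x') + f x' := by ring
              have habs : ‖(1 - f x) + (f x - f x') + f x'‖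
                  ≤ ‖1 - f x‖ + ‖f x - f x'‖ + ‖f x'‖ := by
                calc ‖(1 - f x) + (f x - f x') + f x'‖
                    ≤ ‖(1 - f x) + (f x - f x')‖ + ‖f x'‖ :=
                      norm_add_le _ _
                  _ ≤ _ := by linarith [norm_add_le (1 - f x) (f x - f x')]
              have h1f : ‖1 - f x‖ = ‖f x - 1‖ :=
                norm_sub_rev 1 (f x)
              rw [← key, norm_one, h1f] at habs
              linarith
            · intro hxa'
              by_contra hxa
              have hs1 : ‖f x' - 1‖ ≤ 1/4 := hxa'
              have hs2 : ‖f x‖ ≤ 1/4 := hsmall x hx0 hxa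
              have key : (1:ℂ) = (1 - f x') + (f x' - f x) + f x := by ring
              have habs : ‖(1 - f x') + (f x' - f x) + f x‖
                  ≤ ‖1 - f x'‖ + ‖f x' - f x‖ + ‖f x‖ := by
                calc ‖(1 - f x') + (f x' - f x) + f x‖
                    ≤ ‖(1 - f x') + (f x' - f x)‖ + ‖f x‖ :=
                      norm_add_le _ _
                  _ ≤ _ := by linarith [norm_add_le (1 - f x') (f x' - f x)]
              have h1f : ‖1 - f x'‖ = ‖f x' - 1‖ :=
                norm_sub_rev 1 (f x')
              have hsym : ‖f x' - f x‖ = ‖f x - f x'‖ :=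
                norm_sub_rev _ _
              rw [← key, norm_one, h1f, hsym] at habs
              linarith
          have hdd : |dist x x₀ - dist x' x₀| ≤ dist x x' := abs_dist_sub_le x x' x₀
          by_cases hxa : x ∈ A
          · have hxa' : x' ∈ A := hside.1 hxa
            simp only [hg, if_pos hxa, if_pos hxa']
            rw [ell]
            linarith
          · have hxa' : x' ∉ A := fun h => hxa (hside.2 h)
            simp only [hg, if_neg hxa, if_neg hxa']
            rw [err]
            linarith
      · intro W hW
        obtain ⟨r, hrW⟩ := hW.subset_closedBall
          (Sum.inl (ULift.up (0:ℝ)) : (ULift.{u} ℝ) ⊕ (ULift.{u} ℝ))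
        have hsub : g ⁻¹' W ⊆ Metric.closedBall x₀ (r + 1) := by
          intro x hx
          have hd : dist (g x) (Sum.inl (ULift.up (0:ℝ))) ≤ r := hrW hx
          have d1 : (0:ℝ) ≤ dist x x₀ := dist_nonneg
          simp only [Metric.mem_closedBall]
          by_cases hxa : x ∈ A
          · simp only [hg, if_pos hxa] at hd
            rw [ell] at hd
            rw [abs_of_nonneg (by linarith : (0:ℝ) ≤ dist x x₀ - 0)] at hd
            linarith
          · simp only [hg, if_neg hxa] at hd
            rw [erl] at hd
            simp only [sub_zero, zero_sub, abs_neg, abs_zero] at hd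
            rw [abs_of_nonneg d1] at hd
            linarith
        exact Metric.isBounded_closedBall.subset hsub
    -- apply condition (C)
    rcases hC (ULift.{u} ℝ) (ULift.{u} ℝ) ⟨0⟩ ⟨0⟩ g hgc with
      ⟨g', _, R', hR', hclose⟩ | ⟨h, _, R', hR', hclose⟩
    · -- f is close to 1 at infinity : contradiction with hn1
      apply hn1
      have hAc : ∀ x, x ∉ A → dist x x₀ ≤ R' := by
        intro x hxa
        have hd := hclose x
        simp only [Function.comp, hg, if_neg hxa] at hd
        have e : dist (Sum.inl (g' x) : (ULift.{u} ℝ) ⊕ (ULift.{u} ℝ))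
            (Sum.inr (ULift.up (dist x x₀)))
            = dist (g' x) (ULift.up (0:ℝ)) + 1 + dist (ULift.up (0:ℝ)) (ULift.up (dist x x₀)) :=
          rfl
        rw [e, hul, hul] at hd
        have h0 : (0:ℝ) ≤ |(g' x).down - 0| := abs_nonneg _
        simp only [zero_sub, abs_neg] at hd
        rw [abs_of_nonneg (dist_nonneg (x := x) (y := x₀))] at hd
        linarith
      intro ε hε
      obtain ⟨B₂, hB₂, hB₂s⟩ := hsq (ε/2) (by linarith)
      refine ⟨Metric.closedBall x₀ R' ∪ B₂, Metric.isBounded_closedBall.union hB₂, ?_⟩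
      intro x hx
      have hx1 : x ∉ Metric.closedBall x₀ R' := fun h => hx (Set.mem_union_left _ h)
      have hx2 : x ∉ B₂ := fun h => hx (Set.mem_union_right _ h)
      have hxa : x ∈ A := by
        by_contra hxa
        exact hx1 (Metric.mem_closedBall.2 (hAc x hxa))
      have hs1 : ‖f x - 1‖ ≤ 1/4 := hxa
      have hfl : (3:ℝ)/4 ≤ ‖f x‖ := by
        have key : (1:ℂ) = f x + (1 - f x) := by ring
        have habs := norm_add_le (f x) (1 - f x)
        rw [← key, norm_one] at habs
        have h1f : ‖1 - f x‖ = ‖f x - 1‖ :=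
          norm_sub_rev 1 (f x)
        rw [h1f] at habs
        linarith
      have hsq2 : ‖f x‖ * ‖f x - 1‖ ≤ ε/2 := by
        have := hB₂s x hx2
        have h2 : f x * f x - f x = f x * (f x - 1) := by ring
        simpa [h2, map_mul] using this
      have hfin : ‖f x - 1‖ ≤ ε := by
        nlinarith [norm_nonneg (f x - 1)]
      have e1 : (1 - f) x = 1 - f x := rfl
      rw [e1]
      rw [norm_sub_rev 1 (f x)]
      exact hfin
    · -- f is close to 0 at infinity : contradiction with hnf
      apply hnf
      have hAc : ∀ x, x ∈ A → dist x x₀ ≤ R' := by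
        intro x hxa
        have hd := hclose x
        simp only [Function.comp, hg, if_pos hxa] at hd
        have e : dist (Sum.inr (h x) : (ULift.{u} ℝ) ⊕ (ULift.{u} ℝ))
            (Sum.inl (ULift.up (dist x x₀)))
            = dist (ULift.up (dist x x₀)) (ULift.up (0:ℝ)) + 1 + dist (ULift.up (0:ℝ)) (h x) :=
          rfl
        rw [e, hul] at hd
        have := dist_nonneg (x := (ULift.up (0:ℝ))) (y := h x)
        rw [abs_of_nonneg (by linarith [dist_nonneg (x := x) (y := x₀)] :
          (0:ℝ) ≤ dist x x₀ - 0)] at hd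
        linarith
      intro ε hε
      obtain ⟨B₂, hB₂, hB₂s⟩ := hsq (ε/2) (by linarith)
      obtain ⟨C₀, hC₀sub⟩ := hB₀.subset_closedBall x₀
      refine ⟨Metric.closedBall x₀ (max R' C₀) ∪ B₂,
        Metric.isBounded_closedBall.union hB₂, ?_⟩
      intro x hx
      have hx1 : x ∉ Metric.closedBall x₀ (max R' C₀) := fun h => hx (Set.mem_union_left _ h)
      have hx2 : x ∉ B₂ := fun h => hx (Set.mem_union_right _ h)
      have hxa : x ∉ A := by
        intro hxa
        exact hx1 (Metric.mem_closedBall.2 (le_trans (hAc x hxa) (le_max_left _ _)))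
      have hxb0 : x ∉ B₀ := by
        intro hxb
        exact hx1 (Metric.mem_closedBall.2 (le_trans (hC₀sub hxb) (le_max_right _ _)))
      have hs1 : ‖f x‖ ≤ 1/4 := hsmall x hxb0 hxa
      have hfl : (3:ℝ)/4 ≤ ‖f x - 1‖ := by
        have key : (1:ℂ) = f x + (1 - f x) := by ring
        have habs := norm_add_le (f x) (1 - f x)
        rw [← key, norm_one] at habs
        have h1f : ‖1 - f x‖ = ‖f x - 1‖ :=
          norm_sub_rev 1 (f x)
        rw [h1f] at habs
        linarith
      have hsq2 : ‖f x‖ * ‖f x - 1‖ ≤ ε/2 := by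
        have := hB₂s x hx2
        have h2 : f x * f x - f x = f x * (f x - 1) := by ring
        simpa [h2, map_mul] using this
      nlinarith [norm_nonneg (f x)]
  · -- No nontrivial idempotent implies condition (C).
    intro hni
    intro Y Z _ _ y₀ z₀ f hf
    letI I : MetricSpace (Y ⊕ Z) := coprodMetric y₀ z₀
    classical
    have ell : ∀ a b : Y, dist (Sum.inl a : Y ⊕ Z) (Sum.inl b) = dist a b := fun _ _ => rfl
    have err : ∀ a b : Z, dist (Sum.inr a : Y ⊕ Z) (Sum.inr b) = dist a b := fun _ _ => rfl
    have elr : ∀ (a : Y) (b : Z), dist (Sum.inl a : Y ⊕ Z) (Sum.inr b)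
        = dist a y₀ + 1 + dist z₀ b := fun _ _ => rfl
    have erl : ∀ (a : Z) (b : Y), dist (Sum.inr a : Y ⊕ Z) (Sum.inl b)
        = dist b y₀ + 1 + dist z₀ a := fun _ _ => rfl
    set φ : X → ℂ := fun x => if (f x).isLeft then 1 else 0 with hφ
    have hbφ : IsBoundedFn φ := by
      refine ⟨1, fun x => ?_⟩
      by_cases hl : (f x).isLeft <;> simp [hφ, hl]
    have hsoφ : SlowlyOscillating φ := by
      intro ε hε R hR
      obtain ⟨S, hS, hSf⟩ := hf.1 R hR
      refine ⟨f ⁻¹' (Metric.closedBall (Sum.inl y₀ : Y ⊕ Z) (S + 1)),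
        hf.2 _ Metric.isBounded_closedBall, ?_⟩
      intro x hx x' hx' hxx
      have hd : dist (f x) (f x') ≤ S := hSf x x' hxx
      have hsame : (f x).isLeft = (f x').isLeft := by
        rcases hfx : f x with a | a <;> rcases hfx' : f x' with b | b <;>
          simp only [Sum.isLeft]
        · exfalso
          rw [hfx, hfx', elr] at hd
          apply hx
          simp only [Set.mem_preimage, Metric.mem_closedBall, hfx, ell]
          have := dist_nonneg (x := z₀) (y := b)
          linarith
        · exfalso
          rw [hfx, hfx', erl] at hd
          apply hx'
          simp only [Set.mem_preimage, Metric.mem_closedBall, hfx', ell]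
          have := dist_nonneg (x := z₀) (y := a)
          linarith
      simp only [hφ, hsame]
      by_cases hl : (f x').isLeft <;> simp [hl] <;> linarith
    have hsqφ : TendsToZeroAtInfinity (φ * φ - φ) := by
      intro ε hε
      refine ⟨∅, Bornology.isBounded_empty, fun x _ => ?_⟩
      have e : (φ * φ - φ) x = φ x * φ x - φ x := rfl
      rw [e]
      by_cases hl : (f x).isLeft <;> simp [hφ, hl] <;> linarith
    have hDE : TendsToZeroAtInfinity φ ∨ TendsToZeroAtInfinity (1 - φ) := by
      by_contra hcon
      push_neg at hcon
      exact hni ⟨φ, hbφ, hsoφ, hsqφ, hcon.1, hcon.2⟩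
    rcases hDE with hD | hE
    · -- φ → 0 : f eventually lands in Z
      obtain ⟨B, hB, hBs⟩ := hD (1/2) (by norm_num)
      have hright : ∀ x, x ∉ B → ∃ b, f x = Sum.inr b := by
        intro x hx
        rcases hfx : f x with a | b
        · exfalso
          have := hBs x hx
          simp [hφ, hfx] at this
          norm_num at this
        · exact ⟨b, rfl⟩
      set h : X → Z := fun x => Sum.elim (fun _ => z₀) id (f x) with hh
      have hkey : ∀ x, x ∉ B → Sum.inr (h x) = f x := by
        intro x hx
        obtain ⟨b, hb⟩ := hright x hx
        simp [hh, hb]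
      have hcl : Close (Sum.inr ∘ h) f := by
        rcases B.eq_empty_or_nonempty with rfl | ⟨x₁, hx₁⟩
        · refine ⟨1, one_pos, fun x => ?_⟩
          have := hkey x (Set.notMem_empty x)
          simp only [Function.comp, this, dist_self]
          norm_num
        · obtain ⟨r, hr⟩ := hB.subset_closedBall x₁
          have hr0 : (0:ℝ) ≤ r := by
            have := hr hx₁; simpa using this
          obtain ⟨S, hS, hSf⟩ := hf.1 (r + 1) (by linarith)
          set C₁ : ℝ := dist (f x₁) (Sum.inr z₀ : Y ⊕ Z) with hC₁
          have hC₁0 : (0:ℝ) ≤ C₁ := dist_nonneg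
          refine ⟨S + C₁ + 1, by linarith, fun x => ?_⟩
          by_cases hx : x ∈ B
          · have hd1 : dist (f x) (f x₁) ≤ S := by
              apply hSf
              have := hr hx
              simp only [Metric.mem_closedBall] at this
              linarith
            have hd2 : dist (f x) (Sum.inr z₀ : Y ⊕ Z) ≤ S + C₁ := by
              have := dist_triangle (f x) (f x₁) (Sum.inr z₀ : Y ⊕ Z)
              linarith
            rcases hfx : f x with a | b
            · have e1 : (Sum.inr ∘ h) x = (Sum.inr z₀ : Y ⊕ Z) := by
                simp [Function.comp, hh, hfx]
              rw [e1, dist_comm, ← hfx]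
              linarith
            · have e1 : (Sum.inr ∘ h) x = f x := by
                simp [Function.comp, hh, hfx]
              rw [e1, hfx, dist_self]
              linarith
          · have := hkey x hx
            simp only [Function.comp, this, dist_self]
            linarith
      exact Or.inr ⟨h, isCoarse_of_close_isometry Sum.inr err hf hcl, hcl⟩
    · -- 1 - φ → 0 : f eventually lands in Y
      obtain ⟨B, hB, hBs⟩ := hE (1/2) (by norm_num)
      have hleft : ∀ x, x ∉ B → ∃ a, f x = Sum.inl a := by
        intro x hx
        rcases hfx : f x with a | b
        · exact ⟨a, rfl⟩
        · exfalso
          have := hBs x hx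
          have e : (1 - φ) x = 1 - φ x := rfl
          rw [e] at this
          simp [hφ, hfx] at this
          norm_num at this
      set h : X → Y := fun x => Sum.elim id (fun _ => y₀) (f x) with hh
      have hkey : ∀ x, x ∉ B → Sum.inl (h x) = f x := by
        intro x hx
        obtain ⟨a, ha⟩ := hleft x hx
        simp [hh, ha]
      have hcl : Close (Sum.inl ∘ h) f := by
        rcases B.eq_empty_or_nonempty with rfl | ⟨x₁, hx₁⟩
        · refine ⟨1, one_pos, fun x => ?_⟩
          have := hkey x (Set.notMem_empty x)
          simp only [Function.comp, this, dist_self]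
          norm_num
        · obtain ⟨r, hr⟩ := hB.subset_closedBall x₁
          have hr0 : (0:ℝ) ≤ r := by
            have := hr hx₁; simpa using this
          obtain ⟨S, hS, hSf⟩ := hf.1 (r + 1) (by linarith)
          set C₁ : ℝ := dist (f x₁) (Sum.inl y₀ : Y ⊕ Z) with hC₁
          have hC₁0 : (0:ℝ) ≤ C₁ := dist_nonneg
          refine ⟨S + C₁ + 1, by linarith, fun x => ?_⟩
          by_cases hx : x ∈ B
          · have hd1 : dist (f x) (f x₁) ≤ S := by
              apply hSf
              have := hr hx
              simp only [Metric.mem_closedBall] at this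
              linarith
            have hd2 : dist (f x) (Sum.inl y₀ : Y ⊕ Z) ≤ S + C₁ := by
              have := dist_triangle (f x) (f x₁) (Sum.inl y₀ : Y ⊕ Z)
              linarith
            rcases hfx : f x with a | b
            · have e1 : (Sum.inl ∘ h) x = f x := by
                simp [Function.comp, hh, hfx]
              rw [e1, hfx, dist_self]
              linarith
            · have e1 : (Sum.inl ∘ h) x = (Sum.inl y₀ : Y ⊕ Z) := by
                simp [Function.comp, hh, hfx]
              rw [e1, dist_comm, ← hfx]
              linarith
          · have := hkey x hx
            simp only [Function.comp, this, dist_self]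
            linarith
      exact Or.inl ⟨h, isCoarse_of_close_isometry Sum.inl ell hf hcl, hcl⟩
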